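/- arXiv:2506.12193 — 2 statements merged into one kernel-verified Lean document; each statement's English description precedes it below -/
import Mathlib

section
/- For any real δ with 0 < δ ≤ 1/2, (1+δ)·H(δ/(1+δ)) ≤ 2·H(δ), where H is the binary entropy function. -/
/-- The binary entropy function `H(x) = -x·log₂ x - (1-x)·log₂(1-x)`. -/
noncomputable def H (x : ℝ) : ℝ := -x * Real.logb 2 x - (1 - x) * Real.logb 2 (1 - x)

/-- For `0 < δ ≤ 1/2`, we have `(1+δ)·H(δ/(1+δ)) ≤ 2·H(δ)`. -/
theorem entropy_ratio_bound (δ : ℝ) (h0 : 0 < δ) (h1 : δ ≤ 1 / 2) :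
    (1 + δ) * H (δ / (1 + δ)) ≤ 2 * H δ := by
  have hδ1 : (0:ℝ) < 1 + δ := by linarith
  have hδ2 : (0:ℝ) < 1 - δ := by linarith
  have h2 : (0:ℝ) < Real.log 2 := Real.log_pos (by norm_num)
  have l1 : Real.log (1 + δ) ≤ δ := by
    have := Real.log_le_sub_one_of_pos hδ1; linarith
  have l2 : Real.log (1 - δ) ≤ -δ := by
    have := Real.log_le_sub_one_of_pos hδ2; linarith
  have l3 : Real.log δ ≤ δ - 1 := Real.log_le_sub_one_of_pos h0
  have key : (1 + δ) * Real.log (1 + δ) + δ * Real.log δ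
      + 2 * (1 - δ) * Real.log (1 - δ) ≤ 0 := by
    have a : (1 + δ) * Real.log (1 + δ) ≤ (1 + δ) * δ :=
      mul_le_mul_of_nonneg_left l1 hδ1.le
    have b : δ * Real.log δ ≤ δ * (δ - 1) :=
      mul_le_mul_of_nonneg_left l3 h0.le
    have c : (2 * (1 - δ)) * Real.log (1 - δ) ≤ (2 * (1 - δ)) * (-δ) :=
      mul_le_mul_of_nonneg_left l2 (by linarith)
    nlinarith [a, b, c]
  have hfrac : (1:ℝ) - δ / (1 + δ) = 1 / (1 + δ) := by
    field_simp
    ring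
  have e1 : (1 + δ) * H (δ / (1 + δ)) =
      (-δ * Real.log δ + (1 + δ) * Real.log (1 + δ)) / Real.log 2 := by
    simp only [H, Real.logb, hfrac]
    rw [Real.log_div h0.ne' hδ1.ne', Real.log_div one_ne_zero hδ1.ne', Real.log_one]
    field_simp
    ring
  have e2 : 2 * H δ =
      (-2 * δ * Real.log δ - 2 * (1 - δ) * Real.log (1 - δ)) / Real.log 2 := by
    simp only [H, Real.logb]
    field_simp
  rw [e1, e2, div_le_div_iff_of_pos_right h2]
  linarith [key]
end

section
/- Let n be a positive integer, 0 < δ ≤ 1/2, and y a binary string. Then the number of binary strings of length n at edit distance at most δn from y is at most 2^(5·H(δ)·n), where H is the binary entropy function. -/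
namespace Levenshtein

structure Cost (α β δ : Type*) where
  delete : α → δ
  insert : β → δ
  substitute : α → β → δ

end Levenshtein

def levenshtein {α β δ : Type*} [AddZeroClass δ] [Min δ] (C : Levenshtein.Cost α β δ) :
    List α → List β → δ
  | [], ys => ys.foldr (fun y r => C.insert y + r) 0
  | x :: xs, [] => C.delete x + levenshtein C xs []
  | x :: xs, y :: ys =>
    min (C.delete x + levenshtein C xs (y :: ys))
      (min (C.insert y + levenshtein C (x :: xs) ys) (C.substitute x y + levenshtein C xs ys))
termination_by xs ys => xs.length + ys.length

/-- Cost structure where insertions and deletions cost 1 and substitutions cost 2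
(so `levenshtein` computes the minimum number of insertions and deletions). -/
def idCost : Levenshtein.Cost (ZMod 2) (ZMod 2) ℕ where
  delete _ := 1
  insert _ := 1
  substitute a b := if a = b then 0 else 2

/-- Edit distance: minimum number of single-symbol insertions and deletions. -/
def editDist (x y : List (ZMod 2)) : ℕ := levenshtein idCost x y

/-- `Bn n y d`: binary strings of length `n` at edit distance at most `d` from `y`. -/
def Bn (n : ℕ) (y : List (ZMod 2)) (d : ℝ) : Set (List (ZMod 2)) :=
  {x | x.length = n ∧ (editDist x y : ℝ) ≤ d}


@[simp] lemma levenshtein_nil_nil {α β δ : Type*} [AddZeroClass δ] [Min δ]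
    (C : Levenshtein.Cost α β δ) : levenshtein C [] [] = 0 := by
  rw [levenshtein]; rfl

lemma levenshtein_nil_cons {α β δ : Type*} [AddZeroClass δ] [Min δ]
    (C : Levenshtein.Cost α β δ) (y : β) (ys : List β) :
    levenshtein C [] (y :: ys) = C.insert y + levenshtein C [] ys := by
  rw [levenshtein, levenshtein]; rfl

lemma levenshtein_cons_nil {α β δ : Type*} [AddZeroClass δ] [Min δ]
    (C : Levenshtein.Cost α β δ) (x : α) (xs : List α) :
    levenshtein C (x :: xs) [] = C.delete x + levenshtein C xs [] := by
  rw [levenshtein]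

lemma levenshtein_cons_cons {α β δ : Type*} [AddZeroClass δ] [Min δ]
    (C : Levenshtein.Cost α β δ) (x : α) (xs : List α) (y : β) (ys : List β) :
    levenshtein C (x :: xs) (y :: ys) = min (C.delete x + levenshtein C xs (y :: ys))
      (min (C.insert y + levenshtein C (x :: xs) ys) (C.substitute x y + levenshtein C xs ys)) := by
  rw [levenshtein]

lemma lev_nil_left (y : List (ZMod 2)) : levenshtein idCost [] y = y.length := by
  induction y with
  | nil => simp
  | cons b ys ih => rw [levenshtein_nil_cons, ih]; simp [idCost]; omega

lemma lev_nil_right (x : List (ZMod 2)) : levenshtein idCost x [] = x.length := by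
  induction x with
  | nil => simp
  | cons b xs ih => rw [levenshtein_cons_nil, ih]; simp [idCost]; omega

lemma exists_common_sublist (x : List (ZMod 2)) : ∀ y : List (ZMod 2), ∃ z : List (ZMod 2),
    z.Sublist x ∧ z.Sublist y ∧ x.length + y.length ≤ 2 * z.length + levenshtein idCost x y := by
  induction x with
  | nil =>
    intro y
    exact ⟨[], List.nil_sublist _, List.nil_sublist _, by simp [lev_nil_left]⟩
  | cons a xs ihx =>
    intro y
    induction y with
    | nil =>
      exact ⟨[], List.nil_sublist _, List.nil_sublist _, by
        rw [lev_nil_right]; simp [idCost]⟩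
    | cons b ys ihy =>
      rw [levenshtein_cons_cons]
      rcases min_cases (idCost.delete a + levenshtein idCost xs (b :: ys))
        (min (idCost.insert b + levenshtein idCost (a :: xs) ys)
          (idCost.substitute a b + levenshtein idCost xs ys)) with ⟨h, -⟩ | ⟨h, -⟩
      · rw [h]
        obtain ⟨z, h1, h2, h3⟩ := ihx (b :: ys)
        refine ⟨z, h1.cons a, h2, ?_⟩
        have := h1.length_le
        simp only [List.length_cons, idCost] at *
        omega
      · rw [h]
        rcases min_cases (idCost.insert b + levenshtein idCost (a :: xs) ys)
          (idCost.substitute a b + levenshtein idCost xs ys) with ⟨h', -⟩ | ⟨h', -⟩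
        · rw [h']
          obtain ⟨z, h1, h2, h3⟩ := ihy
          refine ⟨z, h1, h2.cons b, ?_⟩
          simp only [List.length_cons, idCost] at *
          omega
        · rw [h']
          obtain ⟨z, h1, h2, h3⟩ := ihx ys
          by_cases hab : a = b
          · subst hab
            refine ⟨a :: z, h1.cons₂ a, h2.cons₂ a, ?_⟩
            simp only [List.length_cons, idCost, if_pos rfl] at *
            omega
          · refine ⟨z, h1.cons a, h2.cons b, ?_⟩
            simp only [List.length_cons, idCost, if_neg hab] at *
            omega

def decode : List (ZMod 2) → List (Option (ZMod 2)) → List (ZMod 2)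
  | _, [] => []
  | z, some b :: t => b :: decode z t
  | [], none :: t => decode [] t
  | a :: z, none :: t => a :: decode (z) t

lemma exists_template {z x : List (ZMod 2)} (h : z.Sublist x) :
    ∃ t : List (Option (ZMod 2)), t.length = x.length ∧
      t.countP (fun o => o.isSome) + z.length ≤ x.length ∧ decode z t = x := by
  induction h with
  | slnil => exact ⟨[], rfl, by simp, rfl⟩
  | @cons z x a h ih =>
    obtain ⟨t, h1, h2, h3⟩ := ih
    exact ⟨some a :: t, by simp [h1], by simp; omega, by simp [decode, h3]⟩
  | @cons_cons z x a h ih =>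
    obtain ⟨t, h1, h2, h3⟩ := ih
    exact ⟨none :: t, by simp [h1], by simp; omega, by simp [decode, h3]⟩

def tmpl : ℕ → ℕ → List (List (Option (ZMod 2)))
  | 0, _ => [[]]
  | n+1, k =>
      ((tmpl n k).map (fun t => none :: t)) ++
      (match k with
       | 0 => []
       | k+1 => ((tmpl n k).map (fun t => some 0 :: t)) ++
                ((tmpl n k).map (fun t => some 1 :: t)))

lemma mem_tmpl : ∀ (t : List (Option (ZMod 2))) (k : ℕ),
    t.countP (fun o => o.isSome) ≤ k → t ∈ tmpl t.length k := by
  intro t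
  induction t with
  | nil => intro k _; simp [tmpl]
  | cons o t ih =>
    intro k hk
    cases o with
    | none =>
      have ht : t ∈ tmpl t.length k := ih k (by simpa using hk)
      simp only [List.length_cons, tmpl]
      exact List.mem_append_left _ (List.mem_map.mpr ⟨t, ht, rfl⟩)
    | some b =>
      have hcount : t.countP (fun o => o.isSome) + 1 ≤ k := by simpa using hk
      obtain ⟨k', rfl⟩ : ∃ k', k = k' + 1 := ⟨k - 1, by omega⟩
      have ht : t ∈ tmpl t.length k' := ih k' (by omega)
      have hball : ∀ c : ZMod 2, c = 0 ∨ c = 1 := by decide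
      have hb := hball b
      simp only [List.length_cons, tmpl]
      refine List.mem_append_right _ ?_
      rcases hb with rfl | rfl
      · exact List.mem_append_left _ (List.mem_map.mpr ⟨t, ht, rfl⟩)
      · exact List.mem_append_right _ (List.mem_map.mpr ⟨t, ht, rfl⟩)

lemma sum_choose_succ_eq (n k : ℕ) :
    ∑ i ∈ Finset.range (k+1), (n+1).choose i
      = ∑ i ∈ Finset.range (k+1), n.choose i + ∑ i ∈ Finset.range k, n.choose i := by
  induction k with
  | zero => simp
  | succ k ih =>
    rw [Finset.sum_range_succ, ih, Nat.choose_succ_succ,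
      Finset.sum_range_succ (f := fun i => n.choose i) (n := k+1),
      Finset.sum_range_succ (f := fun i => n.choose i) (n := k)]
    simp only [Nat.succ_eq_add_one]
    omega

lemma tmpl_length : ∀ (n k : ℕ),
    (tmpl n k).length ≤ 2 ^ k * ∑ i ∈ Finset.range (k+1), n.choose i := by
  intro n
  induction n with
  | zero =>
    intro k
    have hz : ∀ i ∈ Finset.range (k+1), i ≠ 0 → Nat.choose 0 i = 0 := by
      intro i _ hi
      exact Nat.choose_eq_zero_of_lt (by omega)
    have : ∑ i ∈ Finset.range (k+1), Nat.choose 0 i = 1 := by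
      rw [Finset.sum_eq_single 0 hz (by simp)]
      rfl
    simp only [tmpl, List.length_singleton, this, mul_one]
    exact Nat.one_le_two_pow
  | succ n ih =>
    intro k
    cases k with
    | zero => simpa [tmpl] using ih 0
    | succ k =>
      have h1 := ih (k+1)
      have h2 := ih k
      have hid := sum_choose_succ_eq n (k+1)
      simp only [tmpl, List.length_append, List.length_map]
      calc (tmpl n (k+1)).length + ((tmpl n k).length + (tmpl n k).length)
          ≤ 2^(k+1) * (∑ i ∈ Finset.range (k+1+1), n.choose i)
            + 2 * (2^k * ∑ i ∈ Finset.range (k+1), n.choose i) := by omega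
        _ = 2^(k+1) * (∑ i ∈ Finset.range (k+1+1), n.choose i
            + ∑ i ∈ Finset.range (k+1), n.choose i) := by rw [pow_succ]; ring
        _ = 2^(k+1) * ∑ i ∈ Finset.range (k+1+1), (n+1).choose i := by rw [hid]

lemma sum_choose_add_le (n k : ℕ) : ∀ j : ℕ,
    ∑ i ∈ Finset.range (k+1), (n+j).choose i ≤ 2 ^ j * ∑ i ∈ Finset.range (k+1), n.choose i := by
  intro j
  induction j with
  | zero => simp
  | succ j ih =>
    have h := sum_choose_succ_eq (n+j) k
    have h2 : ∑ i ∈ Finset.range k, (n+j).choose i ≤ ∑ i ∈ Finset.range (k+1), (n+j).choose i :=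
      Finset.sum_le_sum_of_subset (Finset.range_subset_range.mpr (by omega))
    have : n + (j+1) = (n + j) + 1 := by omega
    rw [this, sum_choose_succ_eq]
    have hp : 2 ^ (j+1) = 2 ^ j + 2 ^ j := by ring
    rw [hp, add_mul]
    omega

lemma self_le_H {δ : ℝ} (h0 : 0 < δ) (h : δ ≤ 1/2) : δ ≤ H δ := by
  have h1 : (0:ℝ) < 1 - δ := by linarith
  have hl1 : Real.logb 2 δ ≤ -1 := by
    have h2 : Real.logb 2 δ ≤ Real.logb 2 (1/2) :=
      Real.logb_le_logb_of_le (by norm_num) h0 h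
    have h3 : Real.logb 2 ((1:ℝ)/2) = -1 := by
      rw [one_div, Real.logb_inv, Real.logb_self_eq_one (by norm_num)]
    linarith
  have hl2 : Real.logb 2 (1 - δ) ≤ 0 :=
    Real.logb_nonpos (by norm_num) (by linarith) (by linarith)
  have e1 : δ * (-Real.logb 2 δ) ≥ δ * 1 := by nlinarith
  have e2 : (1 - δ) * (-Real.logb 2 (1-δ)) ≥ 0 := by nlinarith
  unfold H
  nlinarith

lemma sum_choose_le_exp (n d : ℕ) {δ : ℝ} (h0 : 0 < δ) (h : δ ≤ 1/2)
    (hd : (d:ℝ) ≤ δ * n) (hdn : d ≤ n) :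
    ((∑ i ∈ Finset.range (d+1), n.choose i : ℕ) : ℝ) ≤ 2 ^ (H δ * n) := by
  have h1 : (0:ℝ) < 1 - δ := by linarith
  set q : ℝ := δ ^ (δ * (n:ℝ)) * (1-δ) ^ ((1-δ) * (n:ℝ)) with hq
  have hqpos : 0 < q := mul_pos (Real.rpow_pos_of_pos h0 _) (Real.rpow_pos_of_pos h1 _)
  have hH : (2:ℝ) ^ (H δ * n) = q⁻¹ := by
    have e1 : (2:ℝ) ^ (H δ * (n:ℝ)) =
        2 ^ (Real.logb 2 δ * (-(δ*(n:ℝ)))) * 2 ^ (Real.logb 2 (1-δ) * (-((1-δ)*(n:ℝ)))) := by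
      rw [← Real.rpow_add (by norm_num)]
      congr 1
      simp only [H]
      ring
    rw [e1, Real.rpow_mul (by norm_num), Real.rpow_mul (by norm_num),
        Real.rpow_logb (by norm_num) (by norm_num) h0,
        Real.rpow_logb (by norm_num) (by norm_num) h1,
        Real.rpow_neg h0.le, Real.rpow_neg h1.le, ← mul_inv, hq]
  rw [hH, inv_eq_one_div, le_div_iff₀ hqpos, Nat.cast_sum, Finset.sum_mul]
  have key : ∀ i ∈ Finset.range (d+1),
      ((n.choose i : ℕ) : ℝ) * q ≤ δ ^ (i:ℕ) * (1-δ) ^ (n - i : ℕ) * (n.choose i) := by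
    intro i hi
    rw [Finset.mem_range] at hi
    have hin : i ≤ n := le_trans (by omega) hdn
    have hiδ : (i:ℝ) ≤ δ * n := le_trans (by exact_mod_cast Nat.cast_le.mpr (by omega : i ≤ d)) hd
    have hqle : q ≤ δ ^ (i:ℕ) * (1-δ) ^ (n - i : ℕ) := by
      have he : (0:ℝ) ≤ δ * n - i := by linarith
      have r1 : δ ^ (δ * (n:ℝ)) = δ ^ ((i:ℝ)) * δ ^ (δ * n - i) := by
        rw [← Real.rpow_add h0]; ring_nf
      have r2 : (1-δ) ^ ((1-δ) * (n:ℝ)) * (1-δ) ^ (δ * n - i) = (1-δ) ^ ((n:ℝ) - i) := by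
        rw [← Real.rpow_add h1]; ring_nf
      have r3 : δ ^ (δ * n - (i:ℝ)) ≤ (1-δ) ^ (δ * n - (i:ℝ)) :=
        Real.rpow_le_rpow h0.le (by linarith) he
      have : q ≤ δ ^ ((i:ℝ)) * (1-δ) ^ ((n:ℝ) - i) := by
        calc q = δ ^ ((i:ℝ)) * δ ^ (δ * n - (i:ℝ)) * (1-δ) ^ ((1-δ) * (n:ℝ)) := by
              rw [hq, r1]
          _ ≤ δ ^ ((i:ℝ)) * (1-δ) ^ (δ * n - (i:ℝ)) * (1-δ) ^ ((1-δ) * (n:ℝ)) := by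
              have hmul := mul_le_mul_of_nonneg_left r3 (Real.rpow_pos_of_pos h0 ((i:ℝ))).le
              nlinarith [Real.rpow_pos_of_pos h1 ((1-δ) * (n:ℝ))]
          _ = (1-δ) ^ ((1-δ) * (n:ℝ)) * (1-δ) ^ (δ * n - (i:ℝ)) * δ ^ ((i:ℝ)) := by ring
          _ = (1-δ) ^ ((n:ℝ) - i) * δ ^ ((i:ℝ)) := by rw [r2]
          _ = δ ^ ((i:ℝ)) * (1-δ) ^ ((n:ℝ) - i) := by ring
      calc q ≤ δ ^ ((i:ℝ)) * (1-δ) ^ ((n:ℝ) - i) := this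
        _ = δ ^ (i:ℕ) * (1-δ) ^ (n - i : ℕ) := by
            rw [← Nat.cast_sub hin, Real.rpow_natCast, Real.rpow_natCast]
    calc ((n.choose i : ℕ) : ℝ) * q ≤ ((n.choose i : ℕ) : ℝ) * (δ ^ (i:ℕ) * (1-δ) ^ (n - i : ℕ)) :=
          mul_le_mul_of_nonneg_left hqle (Nat.cast_nonneg _)
      _ = δ ^ (i:ℕ) * (1-δ) ^ (n - i : ℕ) * (n.choose i) := by ring
  calc ∑ i ∈ Finset.range (d+1), ((n.choose i : ℕ) : ℝ) * q
      ≤ ∑ i ∈ Finset.range (d+1), δ ^ (i:ℕ) * (1-δ) ^ (n - i : ℕ) * (n.choose i) :=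
        Finset.sum_le_sum key
    _ ≤ ∑ i ∈ Finset.range (n+1), δ ^ (i:ℕ) * (1-δ) ^ (n - i : ℕ) * (n.choose i) := by
        apply Finset.sum_le_sum_of_subset_of_nonneg
          (Finset.range_subset_range.mpr (by omega))
        intro i _ _
        positivity
    _ = (δ + (1-δ)) ^ n := (add_pow δ (1-δ) n).symm
    _ = 1 := by norm_num

/-- The number of binary strings of length `n` at edit distance at most `δn` from
a string `y` is at most `2^(5·H(δ)·n)`. -/
theorem editBall_card_le (n : ℕ) (hn : 0 < n) (δ : ℝ) (hδ0 : 0 < δ) (hδ : δ ≤ 1 / 2)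
    (y : List (ZMod 2)) :
    ((Bn n y (δ * n)).ncard : ℝ) ≤ 2 ^ (5 * H δ * n) := by
  have hH0 : 0 ≤ H δ * n :=
    mul_nonneg (le_trans hδ0.le (self_le_H hδ0 hδ)) (Nat.cast_nonneg n)
  rcases (Bn n y (δ * n)).eq_empty_or_nonempty with hemp | ⟨x₀, hx₀⟩
  · rw [hemp]
    simp only [Set.ncard_empty, Nat.cast_zero]
    positivity
  set d := Nat.floor (δ * n) with hd
  have hd_real : (d:ℝ) ≤ δ * n := Nat.floor_le (by positivity)
  have hd_le_n : d ≤ n := by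
    have h2 : (d:ℝ) ≤ (n:ℝ) := by nlinarith [Nat.cast_nonneg (α := ℝ) n]
    exact_mod_cast h2
  have hedit : ∀ x ∈ Bn n y (δ * n), editDist x y ≤ d := fun x hx => Nat.le_floor hx.2
  set m := y.length with hm
  have hmnd : m ≤ n + d := by
    obtain ⟨z₀, hz1, hz2, hz3⟩ := exists_common_sublist x₀ y
    have e1 : editDist x₀ y ≤ d := hedit x₀ hx₀
    have e2 : z₀.length ≤ x₀.length := hz1.length_le
    have e3 : x₀.length = n := hx₀.1
    have e4 : levenshtein idCost x₀ y = editDist x₀ y := rfl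
    rw [e4] at hz3
    omega
  set B : ℕ := ∑ i ∈ Finset.range (d+1), n.choose i with hB
  set ZL : List (List (ZMod 2)) :=
    (List.range (d+1)).flatMap (fun i => List.sublistsLen (m - i) y) with hZL
  set TL : List (List (Option (ZMod 2))) := tmpl n d with hTL
  set XL : List (List (ZMod 2)) :=
    (ZL ×ˢ TL).map (fun p => decode p.1 p.2) with hXL
  -- length bounds
  have list_sum : ∀ (N : ℕ) (f : ℕ → ℕ),
      ((List.range N).map f).sum = ∑ i ∈ Finset.range N, f i := by
    intro N f
    induction N with
    | zero => simp
    | succ N ih => simp [List.range_succ, Finset.sum_range_succ, ih]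
  have hZLlen : ZL.length ≤ 2 ^ d * B := by
    rw [hZL, List.length_flatMap]
    have e1 : (List.map (fun i => (List.sublistsLen (m - i) y).length) (List.range (d+1))).sum
        = ∑ i ∈ Finset.range (d+1), m.choose (m - i) := by
      rw [show (fun i => (List.sublistsLen (m - i) y).length)
          = fun i => m.choose (m - i) from funext fun i => by
            rw [List.length_sublistsLen]]
      exact list_sum (d+1) _
    rw [e1]
    calc ∑ i ∈ Finset.range (d+1), m.choose (m - i)
        ≤ ∑ i ∈ Finset.range (d+1), (n + d).choose i := by
          apply Finset.sum_le_sum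
          intro i hi
          rw [Finset.mem_range] at hi
          by_cases him : i ≤ m
          · rw [Nat.choose_symm him]
            exact Nat.choose_le_choose i hmnd
          · have : m - i = 0 := by omega
            rw [this]
            simpa using Nat.succ_le_of_lt (Nat.choose_pos (by omega : i ≤ n + d))
      _ ≤ 2 ^ d * B := sum_choose_add_le n d d
  have hTLlen : TL.length ≤ 2 ^ d * B := tmpl_length n d
  have hXLlen : XL.length ≤ (2 ^ d * B) * (2 ^ d * B) := by
    rw [hXL, List.length_map, List.length_product]
    exact Nat.mul_le_mul hZLlen hTLlen
  -- inclusion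
  have hsub : Bn n y (δ * n) ⊆ {x | x ∈ XL} := by
    intro x hx
    obtain ⟨z, hzx, hzy, hzlen⟩ := exists_common_sublist x y
    have h1 : editDist x y ≤ d := hedit x hx
    have hxlen : x.length = n := hx.1
    have hz_le_x : z.length ≤ x.length := hzx.length_le
    have hz_le_y : z.length ≤ m := hzy.length_le
    have e4 : levenshtein idCost x y = editDist x y := rfl
    rw [e4] at hzlen
    have hzZL : z ∈ ZL := by
      rw [hZL]
      refine List.mem_flatMap.mpr ⟨m - z.length, List.mem_range.mpr (by omega), ?_⟩
      exact List.mem_sublistsLen.mpr ⟨hzy, by omega⟩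
    obtain ⟨t, ht1, ht2, ht3⟩ := exists_template hzx
    have htTL : t ∈ TL := by
      have := mem_tmpl t d (by omega)
      rwa [ht1, hxlen] at this
    exact List.mem_map.mpr ⟨(z, t), List.mem_product.mpr ⟨hzZL, htTL⟩, ht3⟩
  have hcard : (Bn n y (δ * n)).ncard ≤ XL.length := by
    calc (Bn n y (δ * n)).ncard ≤ (↑XL.toFinset : Set (List (ZMod 2))).ncard := by
          apply Set.ncard_le_ncard _ XL.toFinset.finite_toSet
          rwa [List.coe_toFinset]
      _ = XL.toFinset.card := Set.ncard_coe_finset _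
      _ ≤ XL.length := XL.toFinset_card_le
  -- real estimates
  have hBr : (B:ℝ) ≤ 2 ^ (H δ * n) := sum_choose_le_exp n d hδ0 hδ hd_real hd_le_n
  have h2d : ((2 ^ d : ℕ) : ℝ) ≤ 2 ^ (H δ * n) := by
    have e1 : ((2 ^ d : ℕ) : ℝ) = (2:ℝ) ^ ((d:ℕ) : ℝ) := by
      rw [Real.rpow_natCast]; push_cast; ring
    rw [e1]
    apply Real.rpow_le_rpow_of_exponent_le (by norm_num)
    calc ((d:ℕ):ℝ) ≤ δ * n := hd_real
      _ ≤ H δ * n := mul_le_mul_of_nonneg_right (self_le_H hδ0 hδ) (Nat.cast_nonneg n)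
  have hBr0 : (0:ℝ) ≤ (B:ℝ) := Nat.cast_nonneg _
  have h2d0 : (0:ℝ) ≤ ((2 ^ d : ℕ) : ℝ) := Nat.cast_nonneg _
  calc ((Bn n y (δ * n)).ncard : ℝ) ≤ ((2 ^ d * B) * (2 ^ d * B) : ℕ) := by
        exact_mod_cast le_trans hcard hXLlen
    _ = ((2 ^ d : ℕ) : ℝ) * (B:ℝ) * (((2 ^ d : ℕ) : ℝ) * (B:ℝ)) := by push_cast; ring
    _ ≤ 2 ^ (H δ * n) * 2 ^ (H δ * n) * (2 ^ (H δ * n) * 2 ^ (H δ * n)) := by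
        have p1 : (0:ℝ) ≤ 2 ^ (H δ * n) := (Real.rpow_pos_of_pos (by norm_num) _).le
        apply mul_le_mul (mul_le_mul h2d hBr hBr0 p1) (mul_le_mul h2d hBr hBr0 p1)
          (mul_nonneg h2d0 hBr0) (mul_nonneg p1 p1)
    _ = 2 ^ (H δ * n + H δ * n + (H δ * n + H δ * n)) := by
        rw [← Real.rpow_add (by norm_num), ← Real.rpow_add (by norm_num)]
    _ ≤ 2 ^ (5 * H δ * n) := by
        apply Real.rpow_le_rpow_of_exponent_le (by norm_num)
        nlinarith
end
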